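/- Let (f_t(ε))_{ε ∈ ℕ} solve the system: f'_t(0) = (1/2)∑_{ε≥1} f_t(ε)², f'_t(ε) = -f_t(ε)² for odd ε ≥ 1, and f'_t(ε) = (1/2)f_t(ε/2)² - f_t(ε)² for even ε ≥ 2, with 0 ≤ f_0(ε) ≤ 1 for all ε. Then for every ε ≥ 1 and t ≥ 0, f_t(ε) ≤ 2/(1+t). -/

import Mathlib

open Set Filter

/-- Right-hand side of the modified discrete Boltzmann system:
`f'(0) = (1/2)∑_{ε≥1} f(ε)²`, `f'(ε) = -f(ε)²` for odd `ε`,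
`f'(ε) = (1/2) f(ε/2)² - f(ε)²` for even `ε ≥ 2`. -/
noncomputable def mbRHS (g : ℕ → ℝ) (ε : ℕ) : ℝ :=
  if ε = 0 then (1 / 2) * ∑' n : ℕ, (g (n + 1)) ^ 2
  else if Odd ε then -(g ε) ^ 2
  else (1 / 2) * (g (ε / 2)) ^ 2 - (g ε) ^ 2

/-- `f` solves the modified Boltzmann system on `[0, ∞)`. -/
def SolvesMBE (f : ℝ → ℕ → ℝ) : Prop :=
  ∀ t : ℝ, 0 ≤ t → ∀ ε : ℕ, HasDerivAt (fun s => f s ε) (mbRHS (f t) ε) t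

/-- Lower bound on the right-hand side for `ε ≥ 1`. -/
lemma mbRHS_ge (g : ℕ → ℝ) {ε : ℕ} (hε : 1 ≤ ε) : -(g ε) ^ 2 ≤ mbRHS g ε := by
  have h0 : ε ≠ 0 := by omega
  unfold mbRHS
  rw [if_neg h0]
  by_cases h : Odd ε
  · rw [if_pos h]
  · rw [if_neg h]
    nlinarith [sq_nonneg (g (ε / 2))]

/-- Upper bound on the right-hand side for `ε ≥ 1`. -/
lemma mbRHS_le (g : ℕ → ℝ) {ε : ℕ} (hε : 1 ≤ ε) {B : ℝ} (hB : 0 ≤ B)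
    (h2 : Even ε → (g (ε / 2)) ^ 2 ≤ B) :
    mbRHS g ε ≤ (1 / 2) * B - (g ε) ^ 2 := by
  have h0 : ε ≠ 0 := by omega
  unfold mbRHS
  rw [if_neg h0]
  by_cases h : Odd ε
  · rw [if_pos h]; nlinarith
  · rw [if_neg h]
    have := h2 (Nat.not_odd_iff_even.mp h)
    nlinarith

/-- Continuity of each component of a solution on intervals in `[0, ∞)`. -/
lemma mbe_contOn (f : ℝ → ℕ → ℝ) (hf : SolvesMBE f) (ε : ℕ) {a b : ℝ} (ha : 0 ≤ a) :
    ContinuousOn (fun s => f s ε) (Set.Icc a b) := by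
  intro x hx
  exact ((hf x (le_trans ha hx.1) ε).continuousAt).continuousWithinAt

/-- Nonnegativity is preserved for components `ε ≥ 1`. -/
lemma mbe_nonneg (f : ℝ → ℕ → ℝ) (hf : SolvesMBE f)
    (hinit : ∀ ε : ℕ, 0 ≤ f 0 ε ∧ f 0 ε ≤ 1) {ε : ℕ} (hε : 1 ≤ ε) :
    ∀ t : ℝ, 0 ≤ t → 0 ≤ f t ε := by
  intro t1 ht1
  by_contra hneg
  push_neg at hneg
  set S : Set ℝ := {t ∈ Set.Icc (0:ℝ) t1 | 0 ≤ f t ε} with hS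
  have hconts : ContinuousOn (fun s => f s ε) (Set.Icc 0 t1) := mbe_contOn f hf ε le_rfl
  have hSne : S.Nonempty := ⟨0, ⟨Set.left_mem_Icc.2 ht1, (hinit ε).1⟩⟩
  have hSbdd : BddAbove S := BddAbove.mono (fun x hx => hx.1) bddAbove_Icc
  have hSeq : S = Set.Icc (0:ℝ) t1 ∩ (fun s => f s ε) ⁻¹' Set.Ici 0 := by
    ext x; simp [hS, Set.mem_sep_iff]
  have hScl : IsClosed S := by
    rw [hSeq]
    exact hconts.preimage_isClosed_of_isClosed isClosed_Icc isClosed_Ici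
  have hScomp : IsCompact S := isCompact_Icc.of_isClosed_subset hScl fun x hx => hx.1
  set t0 : ℝ := sSup S with ht0def
  have ht0S : t0 ∈ S := hScomp.sSup_mem hSne
  have ht0mem : t0 ∈ Set.Icc (0:ℝ) t1 := ht0S.1
  have ht0nonneg : 0 ≤ f t0 ε := ht0S.2
  have ht0lt : t0 < t1 := by
    rcases lt_or_eq_of_le ht0mem.2 with h | h
    · exact h
    · exact absurd (h ▸ ht0nonneg) (not_le.2 hneg)
  -- f is negative strictly after t0
  have hnegOn : ∀ x ∈ Set.Ioc t0 t1, f x ε < 0 := by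
    intro x hx
    by_contra hge
    push_neg at hge
    have hxS : x ∈ S := ⟨⟨le_trans ht0mem.1 hx.1.le, hx.2⟩, hge⟩
    exact absurd (le_csSup hSbdd hxS) (not_le.2 hx.1)
  -- hence f t0 ε = 0
  have ht00 : f t0 ε = 0 := by
    refine le_antisymm ?_ ht0nonneg
    have htend : Tendsto (fun s => f s ε) (nhdsWithin t0 (Set.Ioi t0)) (nhds (f t0 ε)) :=
      ((hf t0 ht0mem.1 ε).continuousAt).continuousWithinAt
    have hev : ∀ᶠ x in nhdsWithin t0 (Set.Ioi t0), f x ε ≤ 0 := by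
      filter_upwards [Ioc_mem_nhdsGT_of_mem ⟨le_refl t0, ht0lt⟩] with x hx
      exact (hnegOn x hx).le
    exact le_of_tendsto htend hev
  -- nonpositivity on [t0, t1]
  have hnp : ∀ x ∈ Set.Icc t0 t1, f x ε ≤ 0 := by
    intro x hx
    rcases eq_or_lt_of_le hx.1 with h | h
    · rw [← h, ht00]
    · exact (hnegOn x ⟨h, hx.2⟩).le
  -- Grönwall on v = -f
  have hcv : ContinuousOn (fun s => -(f s ε)) (Set.Icc t0 t1) :=
    (mbe_contOn f hf ε ht0mem.1).neg
  obtain ⟨M, hM⟩ : ∃ M : ℝ, ∀ x ∈ Set.Icc t0 t1, -(f x ε) ≤ M := by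
    obtain ⟨z, _, hz⟩ := isCompact_Icc.exists_isMaxOn (Set.nonempty_Icc.2 ht0lt.le) hcv
    exact ⟨-(f z ε), fun x hx => hz hx⟩
  have key : ∀ x ∈ Set.Icc t0 t1, -(f x ε) ≤ gronwallBound 0 M 0 (x - t0) := by
    refine le_gronwallBound_of_liminf_deriv_right_le (f' := fun x => -(mbRHS (f x) ε))
      hcv ?_ (by rw [ht00, neg_zero]) ?_
    · intro x hx r hr
      have hd : HasDerivWithinAt (fun s => -(f s ε)) (-(mbRHS (f x) ε)) (Set.Ici x) x :=
        ((hf x (le_trans ht0mem.1 hx.1) ε).neg).hasDerivWithinAt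
      exact hd.liminf_right_slope_le hr
    · intro x hx
      have hx' : x ∈ Set.Icc t0 t1 := ⟨hx.1, hx.2.le⟩
      have h1 : -(mbRHS (f x) ε) ≤ (f x ε) ^ 2 := by
        have := mbRHS_ge (f x) hε
        linarith
      have h2 : 0 ≤ -(f x ε) := neg_nonneg.2 (hnp x hx')
      have h3 : (f x ε) ^ 2 = (-(f x ε)) * (-(f x ε)) := by ring
      have h4 : (-(f x ε)) * (-(f x ε)) ≤ M * (-(f x ε)) :=
        mul_le_mul_of_nonneg_right (hM x hx') h2
      show -(mbRHS (f x) ε) ≤ M * (-(f x ε)) + 0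
      linarith
  have := key t1 ⟨ht0lt.le, le_refl t1⟩
  rw [gronwallBound_ε0_δ0] at this
  linarith

/-- If `f` solves the modified Boltzmann system with initial datum in `[0,1]`
componentwise, then `f t ε ≤ 2 / (1 + t)` for all `ε ≥ 1` and `t ≥ 0`. -/
theorem mbe_pointwise_bound (f : ℝ → ℕ → ℝ) (hf : SolvesMBE f)
    (hinit : ∀ ε : ℕ, 0 ≤ f 0 ε ∧ f 0 ε ≤ 1) :
    ∀ ε : ℕ, 1 ≤ ε → ∀ t : ℝ, 0 ≤ t → f t ε ≤ 2 / (1 + t) := by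
  intro ε
  induction ε using Nat.strong_induction_on with
  | _ ε IH =>
    intro hε t1 ht1
    by_contra hgt
    push_neg at hgt
    set w : ℝ → ℝ := fun s => f s ε - 2 / (1 + s) with hw
    -- derivative of the barrier
    have hbar : ∀ s : ℝ, 0 ≤ s → HasDerivAt (fun u : ℝ => 2 / (1 + u)) (-(2 / (1 + s) ^ 2)) s := by
      intro s hs
      have hne : (1 : ℝ) + s ≠ 0 := by positivity
      have := (hasDerivAt_const s (2:ℝ)).div ((hasDerivAt_id s).const_add 1) hne
      exact this.congr_deriv (by simp only [id]; ring)
    have hwd : ∀ s : ℝ, 0 ≤ s → HasDerivAt w (mbRHS (f s) ε + 2 / (1 + s) ^ 2) s := by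
      intro s hs
      have := (hf s hs ε).sub (hbar s hs)
      simpa [hw, sub_neg_eq_add, Pi.sub_def] using this
    have hwc : ContinuousOn w (Set.Icc 0 t1) := by
      intro x hx
      exact ((hwd x hx.1).continuousAt).continuousWithinAt
    set S : Set ℝ := {t ∈ Set.Icc (0:ℝ) t1 | w t ≤ 0} with hS
    have h0S : (0:ℝ) ∈ S := by
      refine ⟨Set.left_mem_Icc.2 ht1, ?_⟩
      have := (hinit ε).2
      simp only [hw]
      norm_num
      linarith
    have hSne : S.Nonempty := ⟨0, h0S⟩
    have hSbdd : BddAbove S := BddAbove.mono (fun x hx => hx.1) bddAbove_Icc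
    have hSeq : S = Set.Icc (0:ℝ) t1 ∩ w ⁻¹' Set.Iic 0 := by
      ext x; simp [hS, Set.mem_sep_iff]
    have hScl : IsClosed S := by
      rw [hSeq]
      exact hwc.preimage_isClosed_of_isClosed isClosed_Icc isClosed_Iic
    have hScomp : IsCompact S := isCompact_Icc.of_isClosed_subset hScl fun x hx => hx.1
    set t0 : ℝ := sSup S with ht0def
    have ht0S : t0 ∈ S := hScomp.sSup_mem hSne
    have ht0mem : t0 ∈ Set.Icc (0:ℝ) t1 := ht0S.1
    have hwt1 : 0 < w t1 := by
      simp only [hw]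
      linarith
    have ht0lt : t0 < t1 := by
      rcases lt_or_eq_of_le ht0mem.2 with h | h
      · exact h
      · exact absurd (h ▸ ht0S.2) (not_le.2 hwt1)
    have hposOn : ∀ x ∈ Set.Ioc t0 t1, 0 < w x := by
      intro x hx
      by_contra hge
      push_neg at hge
      have hxS : x ∈ S := ⟨⟨le_trans ht0mem.1 hx.1.le, hx.2⟩, hge⟩
      exact absurd (le_csSup hSbdd hxS) (not_le.2 hx.1)
    -- w is antitone on [t0, t1]
    have hanti : AntitoneOn w (Set.Icc t0 t1) := by
      apply antitoneOn_of_deriv_nonpos (convex_Icc t0 t1)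
      · exact fun x hx => ((hwd x (le_trans ht0mem.1 hx.1)).continuousAt).continuousWithinAt
      · rw [interior_Icc]
        intro x hx
        exact ((hwd x (le_trans ht0mem.1 hx.1.le)).differentiableAt).differentiableWithinAt
      · rw [interior_Icc]
        intro x hx
        have hx0 : (0:ℝ) ≤ x := le_trans ht0mem.1 hx.1.le
        have hx1 : (0:ℝ) < 1 + x := by linarith
        rw [(hwd x hx0).deriv]
        -- f x ε > 2/(1+x) > 0 here
        have hwx : 0 < w x := hposOn x ⟨hx.1, hx.2.le⟩
        have hfx : 2 / (1 + x) < f x ε := by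
          simp only [hw] at hwx; linarith
        have hbpos : 0 < 2 / (1 + x) := by positivity
        -- bound on mbRHS via the induction hypothesis
        have hB : (0:ℝ) ≤ (2 / (1 + x)) ^ 2 := sq_nonneg _
        have h2 : Even ε → (f x (ε / 2)) ^ 2 ≤ (2 / (1 + x)) ^ 2 := by
          intro heven
          have hhalf : 1 ≤ ε / 2 := by
            rcases heven with ⟨k, hk⟩; omega
          have hlt : ε / 2 < ε := by omega
          have hub := IH (ε / 2) hlt hhalf x hx0
          have hlb := mbe_nonneg f hf hinit hhalf x hx0
          nlinarith
        have hle := mbRHS_le (f x) hε hB h2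
        have heq : (2 / (1 + x)) ^ 2 = 4 / (1 + x) ^ 2 := by
          rw [div_pow]; norm_num
        have hsq : (2 / (1 + x)) ^ 2 ≤ (f x ε) ^ 2 :=
          pow_le_pow_left₀ hbpos.le hfx.le 2
        have heq2 : 4 / (1 + x) ^ 2 = 2 * (2 / (1 + x) ^ 2) := by ring
        linarith
    have := hanti (Set.left_mem_Icc.2 ht0lt.le) (Set.right_mem_Icc.2 ht0lt.le) ht0lt.le
    linarith [ht0S.2]
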